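/- In the root system D_4, there exists a unique decomposition of the set of positive roots D_4^+ into three sets F_1, F_2, F_3, each consisting of four pairwise orthogonal roots. -/
import Mathlib


/-- The `i`-th standard basis vector of `ℤ⁴`. -/
def stdVec (i : Fin 4) : Fin 4 → ℤ := fun j => if j = i then 1 else 0

/-- The standard dot product on `ℤ⁴`. -/
def dotZ (v w : Fin 4 → ℤ) : ℤ := ∑ i, v i * w i

/-- The 12 positive roots of `D₄`: `εᵢ − εⱼ` and `εᵢ + εⱼ` for `i < j`. -/
def D4pos : Finset (Fin 4 → ℤ) :=
  ((Finset.univ : Finset (Fin 4 × Fin 4)).filter (fun p => p.1 < p.2)).image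
      (fun p => stdVec p.1 - stdVec p.2) ∪
  ((Finset.univ : Finset (Fin 4 × Fin 4)).filter (fun p => p.1 < p.2)).image
      (fun p => stdVec p.1 + stdVec p.2)

def F1 : Finset (Fin 4 → ℤ) := {![1,-1,0,0], ![1,1,0,0], ![0,0,1,-1], ![0,0,1,1]}
def F2 : Finset (Fin 4 → ℤ) := {![1,0,-1,0], ![1,0,1,0], ![0,1,0,-1], ![0,1,0,1]}
def F3 : Finset (Fin 4 → ℤ) := {![1,0,0,-1], ![1,0,0,1], ![0,1,-1,0], ![0,1,1,0]}

set_option maxRecDepth 10000 in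
theorem nbhd : ∀ α ∈ D4pos,
    D4pos.filter (fun β => β = α ∨ dotZ α β = 0) = F1 ∨
    D4pos.filter (fun β => β = α ∨ dotZ α β = 0) = F2 ∨
    D4pos.filter (fun β => β = α ∨ dotZ α β = 0) = F3 := by decide

set_option maxRecDepth 10000 in
theorem cards : F1.card = 4 ∧ F2.card = 4 ∧ F3.card = 4 := by decide

theorem classify (F : Finset (Fin 4 → ℤ)) (hs : F ⊆ D4pos) (hc : F.card = 4)
    (ho : ∀ α ∈ F, ∀ β ∈ F, α ≠ β → dotZ α β = 0) : F = F1 ∨ F = F2 ∨ F = F3 := by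
  have hne : F.Nonempty := Finset.card_pos.mp (by omega)
  obtain ⟨α, hα⟩ := hne
  have hsub : F ⊆ D4pos.filter (fun β => β = α ∨ dotZ α β = 0) := by
    intro β hβ
    refine Finset.mem_filter.mpr ⟨hs hβ, ?_⟩
    by_cases h : β = α
    · exact Or.inl h
    · exact Or.inr (ho α hα β hβ (fun e => h e.symm))
  rcases nbhd α (hs hα) with h | h | h
  · exact Or.inl (Finset.eq_of_subset_of_card_le (h ▸ hsub) (by rw [hc, cards.1]))
  · exact Or.inr (Or.inl (Finset.eq_of_subset_of_card_le (h ▸ hsub) (by rw [hc, cards.2.1])))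
  · exact Or.inr (Or.inr (Finset.eq_of_subset_of_card_le (h ▸ hsub) (by rw [hc, cards.2.2])))

set_option maxRecDepth 40000 in
theorem Pprop : ({F1, F2, F3} : Finset (Finset (Fin 4 → ℤ))).card = 3 ∧
    (∀ F ∈ ({F1, F2, F3} : Finset (Finset (Fin 4 → ℤ))), F ⊆ D4pos ∧ F.card = 4 ∧
      ∀ α ∈ F, ∀ β ∈ F, α ≠ β → dotZ α β = 0) ∧
    (∀ F ∈ ({F1, F2, F3} : Finset (Finset (Fin 4 → ℤ))),
      ∀ G ∈ ({F1, F2, F3} : Finset (Finset (Fin 4 → ℤ))), F ≠ G → Disjoint F G) ∧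
    ({F1, F2, F3} : Finset (Finset (Fin 4 → ℤ))).sup id = D4pos := by decide

/-- There is a unique decomposition of the positive roots of `D₄` into three sets, each
consisting of four pairwise orthogonal roots. -/
theorem D4_unique_orthogonal_partition :
    ∃! P : Finset (Finset (Fin 4 → ℤ)),
      P.card = 3 ∧
      (∀ F ∈ P, F ⊆ D4pos ∧ F.card = 4 ∧
        ∀ α ∈ F, ∀ β ∈ F, α ≠ β → dotZ α β = 0) ∧
      (∀ F ∈ P, ∀ G ∈ P, F ≠ G → Disjoint F G) ∧
      P.sup id = D4pos := by
  refine ⟨{F1, F2, F3}, Pprop, ?_⟩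
  rintro Q ⟨hc, hF, -, -⟩
  have hsub : Q ⊆ ({F1, F2, F3} : Finset (Finset (Fin 4 → ℤ))) := by
    intro F hFQ
    obtain ⟨h1, h2, h3⟩ := hF F hFQ
    rcases classify F h1 h2 h3 with h | h | h <;> simp [h]
  exact Finset.eq_of_subset_of_card_le hsub (by rw [hc, Pprop.1])
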